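/- One-step simulation of weak call-by-value lambda reduction by Φ: if M →v N, t is a canonical Φ-term, and ⌈t⌉ = M, then there exists u with t → u in Φ and ⌈u⌉ = N. -/

import Mathlib

/-- Pure untyped λ-terms with named variables. -/
inductive Tm : Type
  | var : ℕ → Tm
  | lam : ℕ → Tm → Tm
  | app : Tm → Tm → Tm
deriving DecidableEq

namespace Tm

/-- Free variables. -/
def fv : Tm → Finset ℕ
  | var x => {x}
  | lam x M => fv M \ {x}
  | app M N => fv M ∪ fv N

/-- A term is closed when it has no free variables. -/
def Closed (M : Tm) : Prop := fv M = ∅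

/-- Values: variables and abstractions. -/
def IsValue : Tm → Prop
  | var _ => True
  | lam _ _ => True
  | app _ _ => False

/-- (Naive) substitution `M{N/x}`. -/
def subst : Tm → ℕ → Tm → Tm
  | var y, x, N => if y = x then N else var y
  | lam y P, x, N => if y = x then lam y P else lam y (subst P x N)
  | app P Q, x, N => app (subst P x N) (subst Q x N)

/-- Weak call-by-value reduction: β-redexes whose argument is a value,
closed under both application contexts, never under λ. -/
inductive Cbv : Tm → Tm → Prop
  | beta {x M V} : IsValue V → Cbv (app (lam x M) V) (subst M x V)
  | appL {M N L} : Cbv M N → Cbv (app M L) (app N L)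
  | appR {M N L} : Cbv M N → Cbv (app L M) (app L N)

/-- The subterm relation on λ-terms. -/
inductive Sub : Tm → Tm → Prop
  | refl (M) : Sub M M
  | lam {M N x} : Sub M N → Sub M (lam x N)
  | appL {M N L} : Sub M N → Sub M (app N L)
  | appR {M N L} : Sub M L → Sub M (app N L)

end Tm

/-- `M N₁ … Nₖ` (left-nested application). -/
def appList : Tm → List Tm → Tm := List.foldl Tm.app

/-- `λx₁.…λxₖ.M`. -/
def lams : List ℕ → Tm → Tm := fun xs M => xs.foldr Tm.lam M

/-- `stepsN R n a b`: `a` reduces to `b` in exactly `n` `R`-steps. -/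
def stepsN {α : Type*} (R : α → α → Prop) : ℕ → α → α → Prop
  | 0, a, b => a = b
  | n + 1, a, b => ∃ c, R a c ∧ stepsN R n c b

/-- `a` is an `R`-normal form. -/
def NormalForm {α : Type*} (R : α → α → Prop) (a : α) : Prop := ¬ ∃ b, R a b

/-- Terms of the constructor rewrite system Φ: variables, the binary function
symbol `app`, and a constructor `c_{x,M}` for each variable `x` and λ-term `M`. -/
inductive PTm : Type
  | pvar : ℕ → PTm
  | papp : PTm → PTm → PTm
  | con : ℕ → Tm → List PTm → PTm

namespace PTm

/-- The (sorted) list of free variables of a λ-term. -/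
def fvList (M : Tm) : List ℕ := (Tm.fv M).sort (· ≤ ·)

/-- The translation `⌊·⌋` from λ-terms to Φ-terms. -/
def toP : Tm → PTm
  | .var x => pvar x
  | .lam x M => con x M ((fvList (Tm.lam x M)).map pvar)
  | .app M N => papp (toP M) (toP N)

/-- Simultaneous (sequential, for closed arguments) λ-substitution `M{Nᵢ/xᵢ}`. -/
def substList (M : Tm) (xs : List ℕ) (Ns : List Tm) : Tm :=
  (xs.zip Ns).foldl (fun acc p => Tm.subst acc p.1 p.2) M

/-- The readback `⌈·⌉` from Φ-terms to λ-terms. -/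
def toL : PTm → Tm
  | pvar x => .var x
  | papp u v => .app (toL u) (toL v)
  | con x M ts =>
      substList (Tm.lam x M) (fvList (Tm.lam x M)) (ts.attach.map fun t => toL t.1)
termination_by t => sizeOf t
decreasing_by all_goals first
  | (simp_wf; have := List.sizeOf_lt_of_mem t.2; omega)
  | (simp_wf; omega)
  | simp_wf

/-- First-order substitution on Φ-terms. -/
def psubst : PTm → ℕ → PTm → PTm
  | pvar y, x, N => if y = x then N else pvar y
  | papp u v, x, N => papp (psubst u x N) (psubst v x N)
  | con y M ts, x, N => con y M (ts.attach.map fun t => psubst t.1 x N)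
termination_by t _ _ => sizeOf t
decreasing_by all_goals first
  | (simp_wf; have := List.sizeOf_lt_of_mem t.2; omega)
  | (simp_wf; omega)
  | simp_wf

/-- Simultaneous (sequential, for ground arguments) substitution on Φ-terms. -/
def psubstList (t : PTm) (xs : List ℕ) (us : List PTm) : PTm :=
  (xs.zip us).foldl (fun acc p => psubst acc p.1 p.2) t

/-- Constructor terms of Φ: ground terms built from constructors only. -/
inductive IsConT : PTm → Prop
  | con {x M ts} : (∀ t ∈ ts, IsConT t) → IsConT (con x M ts)

/-- Well-formed Φ-terms: every constructor `c_{x,M}` gets exactly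
`|FV(λx.M)|` arguments. -/
inductive WF : PTm → Prop
  | pvar (x) : WF (pvar x)
  | papp {u v} : WF u → WF v → WF (papp u v)
  | con {x M ts} : ts.length = (fvList (Tm.lam x M)).length →
      (∀ t ∈ ts, WF t) → WF (con x M ts)

/-- Canonical closed Φ-terms: constructor terms, or `app` of canonical terms. -/
inductive Canonical : PTm → Prop
  | ofCon {t} : IsConT t → Canonical t
  | papp {u v} : Canonical u → Canonical v → Canonical (papp u v)

/-- Call-by-value rewriting in Φ: the rules are
`app(c_{x,M}(x₁,…,xₙ), x) → ⌊M⌋` (with `FV(λx.M) = x₁,…,xₙ`), matched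
variables are instantiated by constructor terms, and rewriting is closed
under arbitrary contexts. -/
inductive Step : PTm → PTm → Prop
  | beta {x : ℕ} {M : Tm} {ts : List PTm} {v : PTm} :
      (∀ t ∈ ts, IsConT t) → IsConT v →
      ts.length = (fvList (Tm.lam x M)).length →
      Step (papp (con x M ts) v)
        (psubstList (toP M) (fvList (Tm.lam x M) ++ [x]) (ts ++ [v]))
  | appL {u u' v} : Step u u' → Step (papp u v) (papp u' v)
  | appR {u v v'} : Step v v' → Step (papp u v) (papp u v')
  | conArg {x M t t' l r} : Step t t' →
      Step (con x M (l ++ t :: r)) (con x M (l ++ t' :: r))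

/-- Variables occurring in a Φ-term. -/
def pvarsOf : PTm → Finset ℕ
  | pvar x => {x}
  | papp u v => pvarsOf u ∪ pvarsOf v
  | con _ _ ts => ts.attach.foldr (fun t s => pvarsOf t.1 ∪ s) ∅
termination_by t => sizeOf t
decreasing_by all_goals first
  | (simp_wf; have := List.sizeOf_lt_of_mem t.2; omega)
  | (simp_wf; omega)
  | simp_wf

/-- The subterm relation on Φ-terms. -/
inductive PSub : PTm → PTm → Prop
  | refl (t) : PSub t t
  | appL {t u v} : PSub t u → PSub t (papp u v)
  | appR {t u v} : PSub t v → PSub t (papp u v)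
  | conArg {t u x M ts} : u ∈ ts → PSub t u → PSub t (con x M ts)

end PTm

section Aux

open Tm PTm

/-- Simultaneous substitution. -/
def Tm.ssub : Tm → (ℕ → Tm) → Tm
  | .var x, σ => σ x
  | .lam y P, σ => .lam y (Tm.ssub P (Function.update σ y (.var y)))
  | .app P Q, σ => .app (Tm.ssub P σ) (Tm.ssub Q σ)

def llookup (zs : List ℕ) (Ns : List Tm) (x : ℕ) : Tm :=
  (((zs.zip Ns).find? (fun p => p.1 == x)).map Prod.snd).getD (.var x)

def plookup (zs : List ℕ) (ws : List PTm) (x : ℕ) : PTm :=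
  (((zs.zip ws).find? (fun p => p.1 == x)).map Prod.snd).getD (.pvar x)

theorem llookup_cons (z : ℕ) (N : Tm) (zs : List ℕ) (Ns : List Tm) (x : ℕ) :
    llookup (z :: zs) (N :: Ns) x = if z = x then N else llookup zs Ns x := by
  by_cases h : z = x
  · simp [llookup, List.find?, h, List.zip]
  · have hb : (z == x) = false := by simp [h]
    simp [llookup, List.find?, hb, List.zip, h]

theorem llookup_not_mem {zs : List ℕ} (Ns : List Tm) {x : ℕ} (h : x ∉ zs) :
    llookup zs Ns x = .var x := by
  have : (zs.zip Ns).find? (fun p => p.1 == x) = none := by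
    rw [List.find?_eq_none]
    rintro ⟨a, b⟩ hab
    have := List.of_mem_zip hab
    simp only [beq_iff_eq]
    rintro rfl
    exact h this.1
  simp [llookup, this]

theorem Tm.subst_self (A : Tm) (x : ℕ) : A.subst x (.var x) = A := by
  induction A with
  | var y => simp only [Tm.subst]; split <;> simp_all
  | lam y P ih => simp only [Tm.subst]; split <;> simp_all
  | app P Q ih1 ih2 => simp [Tm.subst, ih1, ih2]

theorem Tm.subst_not_mem {A : Tm} {x : ℕ} (h : x ∉ A.fv) (N : Tm) :
    A.subst x N = A := by
  induction A with
  | var y => simp only [Tm.fv, Finset.mem_singleton] at h; simp [Tm.subst, Ne.symm h]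
  | lam y P ih =>
    simp only [Tm.subst]
    split
    · rfl
    · simp only [Tm.fv, Finset.mem_sdiff, Finset.mem_singleton, not_and, not_not] at h
      rename_i hyx
      have : x ∉ P.fv := fun hx => hyx (h hx).symm
      rw [ih this]
  | app P Q ih1 ih2 =>
    simp only [Tm.fv, Finset.mem_union, not_or] at h
    simp [Tm.subst, ih1 h.1, ih2 h.2]

theorem Tm.ssub_congr {A : Tm} {σ τ : ℕ → Tm} (h : ∀ x ∈ A.fv, σ x = τ x) :
    A.ssub σ = A.ssub τ := by
  induction A generalizing σ τ with
  | var y => exact h y (by simp [Tm.fv])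
  | lam y P ih =>
    simp only [Tm.ssub]
    congr 1
    apply ih
    intro x hx
    by_cases hxy : x = y
    · subst hxy; simp [Function.update]
    · simp only [Function.update, dif_neg hxy]
      exact h x (by simp [Tm.fv, hx, hxy])
  | app P Q ih1 ih2 =>
    simp only [Tm.ssub]
    rw [ih1 (fun x hx => h x (by simp [Tm.fv, hx])),
        ih2 (fun x hx => h x (by simp [Tm.fv, hx]))]

theorem Tm.ssub_var (A : Tm) : A.ssub (fun x => .var x) = A := by
  induction A with
  | var y => rfl
  | lam y P ih =>
    simp only [Tm.ssub]
    rw [show (Function.update (fun x => Tm.var x) y (Tm.var y)) = (fun x => Tm.var x) from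
      Function.update_eq_self y _, ih]
  | app P Q ih1 ih2 => simp [Tm.ssub, ih1, ih2]

theorem Tm.ssub_closed {N : Tm} (hN : N.Closed) (σ : ℕ → Tm) : N.ssub σ = N := by
  rw [Tm.ssub_congr (τ := fun x => .var x) (by intro x hx; rw [Tm.Closed] at hN; simp [hN] at hx),
    Tm.ssub_var]

theorem Tm.subst_ssub (A : Tm) {z : ℕ} {N : Tm} (hN : N.Closed) (σ : ℕ → Tm) :
    (A.subst z N).ssub σ = A.ssub (Function.update σ z N) := by
  induction A generalizing σ with
  | var y =>
    simp only [Tm.subst]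
    split
    · rename_i h; subst h; simp [Tm.ssub, Function.update, Tm.ssub_closed hN]
    · rename_i h; simp [Tm.ssub, Function.update, h]
  | lam y P ih =>
    simp only [Tm.subst]
    split
    · rename_i h; subst h
      simp only [Tm.ssub, Function.update_idem]
    · rename_i h
      simp only [Tm.ssub, ih]
      rw [Function.update_comm h]
  | app P Q ih1 ih2 => simp [Tm.subst, Tm.ssub, ih1, ih2]

end Aux
section Aux2
open Tm PTm

theorem substList_eq_foldl (A : Tm) (zs : List ℕ) (Ns : List Tm) :
    PTm.substList A zs Ns = (zs.zip Ns).foldl (fun acc p => acc.subst p.1 p.2) A := rfl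

theorem substList_eq_ssub (A : Tm) (zs : List ℕ) (Ns : List Tm) (hnd : zs.Nodup)
    (hN : ∀ p ∈ zs.zip Ns, Tm.Closed p.2 ∨ p.2 = Tm.var p.1) :
    PTm.substList A zs Ns = A.ssub (llookup zs Ns) := by
  induction zs generalizing A Ns with
  | nil =>
    rw [show llookup [] Ns = fun x => Tm.var x by funext x; simp [llookup, List.zip]]
    simp [PTm.substList, List.zip, Tm.ssub_var]
  | cons z zs ih =>
    cases Ns with
    | nil =>
      simp only [PTm.substList, List.zip_nil_right, List.foldl_nil]
      rw [show llookup (z :: zs) [] = fun x => Tm.var x by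
        funext x; simp [llookup, List.zip], Tm.ssub_var]
    | cons N Ns =>
      have hzz : z ∉ zs := (List.nodup_cons.mp hnd).1
      have hnd' := (List.nodup_cons.mp hnd).2
      have hstep : PTm.substList A (z :: zs) (N :: Ns) = PTm.substList (A.subst z N) zs Ns := rfl
      rw [hstep]
      have hmem : ∀ p ∈ zs.zip Ns, p ∈ (z :: zs).zip (N :: Ns) :=
        fun p hp => List.mem_cons_of_mem _ hp
      rcases hN (z, N) (List.mem_cons_self) with hcl | hvar
      · rw [ih _ _ hnd' (fun p hp => hN p (hmem p hp)), Tm.subst_ssub _ hcl]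
        congr 1
        funext x
        by_cases hx : x = z
        · subst hx; simp [Function.update, llookup_cons]
        · simp [Function.update, hx, llookup_cons, Ne.symm hx]
      · replace hvar : N = Tm.var z := hvar
        rw [hvar, Tm.subst_self, ih _ _ hnd' (fun p hp => hN p (hmem p hp))]
        congr 1
        funext x
        by_cases hx : x = z
        · subst hx
          rw [llookup_not_mem Ns hzz, llookup_cons]
          simp [hvar]
        · rw [llookup_cons, if_neg (Ne.symm hx)]

theorem llookup_map {xs : List ℕ} (f : ℕ → Tm) {x : ℕ} (hnd : xs.Nodup) (hx : x ∈ xs) :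
    llookup xs (xs.map f) x = f x := by
  induction xs with
  | nil => simp at hx
  | cons a xs ih =>
    rw [List.map_cons, llookup_cons]
    by_cases h : a = x
    · simp [h]
    · rw [if_neg h]
      exact ih (List.nodup_cons.mp hnd).2 (by rcases List.mem_cons.mp hx with h' | h' <;> simp_all)

theorem foldl_subst_lam {y : ℕ} (P : Tm) (ps : List (ℕ × Tm)) (h : ∀ p ∈ ps, p.1 ≠ y) :
    ps.foldl (fun acc p => acc.subst p.1 p.2) (Tm.lam y P) =
      Tm.lam y (ps.foldl (fun acc p => acc.subst p.1 p.2) P) := by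
  induction ps generalizing P with
  | nil => rfl
  | cons p ps ih =>
    simp only [List.foldl_cons]
    rw [show (Tm.lam y P).subst p.1 p.2 = Tm.lam y (P.subst p.1 p.2) by
      simp only [Tm.subst]
      rw [if_neg]
      intro hh
      exact h p (List.mem_cons_self) hh.symm,
      ih _ (fun q hq => h q (by simp [hq]))]

theorem Tm.fv_subst_subset (A : Tm) (x : ℕ) (N : Tm) :
    (A.subst x N).fv ⊆ (A.fv \ {x}) ∪ N.fv := by
  induction A with
  | var y =>
    simp only [Tm.subst]
    split
    · intro a ha; simp [ha]
    · rename_i h; intro a ha; simp only [Tm.fv, Finset.mem_singleton] at ha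
      simp [Tm.fv, ha, h]
  | lam y P ih =>
    simp only [Tm.subst]
    split
    · rename_i h; subst h
      intro a ha
      simp only [Tm.fv, Finset.mem_sdiff, Finset.mem_singleton] at ha
      have h1 : a ∈ (Tm.lam y P).fv := by
        show a ∈ P.fv \ {y}
        simp [ha.1, ha.2]
      apply Finset.mem_union_left
      rw [Finset.mem_sdiff]
      exact ⟨h1, by simp [ha.2]⟩
    · rename_i h
      intro a ha
      simp only [Tm.fv, Finset.mem_sdiff, Finset.mem_singleton] at ha
      have := ih ha.1
      simp only [Tm.fv, Finset.mem_union, Finset.mem_sdiff, Finset.mem_singleton] at this ⊢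
      rcases this with ⟨h1, h2⟩ | h1
      · exact Or.inl ⟨⟨h1, ha.2⟩, h2⟩
      · exact Or.inr h1
  | app P Q ih1 ih2 =>
    intro a ha
    simp only [Tm.subst, Tm.fv, Finset.mem_union] at ha
    rcases ha with ha | ha
    · have := ih1 ha
      simp only [Finset.mem_union, Finset.mem_sdiff, Finset.mem_singleton, Tm.fv] at this ⊢
      tauto
    · have := ih2 ha
      simp only [Finset.mem_union, Finset.mem_sdiff, Finset.mem_singleton, Tm.fv] at this ⊢
      tauto

theorem fv_foldl_subst (A : Tm) (ps : List (ℕ × Tm)) (h : ∀ p ∈ ps, Tm.Closed p.2) :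
    (ps.foldl (fun acc p => acc.subst p.1 p.2) A).fv ⊆ A.fv \ (ps.map Prod.fst).toFinset := by
  induction ps generalizing A with
  | nil => simp
  | cons p ps ih =>
    simp only [List.foldl_cons]
    intro a ha
    have h1 := ih (A.subst p.1 p.2) (fun q hq => h q (by simp [hq])) ha
    simp only [Finset.mem_sdiff] at h1
    have h2 := Tm.fv_subst_subset A p.1 p.2 h1.1
    have hc : Tm.Closed p.2 := h p (by simp)
    rw [Tm.Closed] at hc
    simp only [hc, Finset.union_empty, Finset.mem_sdiff, Finset.mem_singleton] at h2
    simp only [List.map_cons, List.toFinset_cons, Finset.mem_sdiff, Finset.mem_insert, not_or]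
    exact ⟨h2.1, h2.2, fun hh => h1.2 (by simp [hh])⟩

end Aux2
section Aux3
open Tm PTm

theorem PTm.psubst_con (x : ℕ) (M : Tm) (ts : List PTm) (z : ℕ) (w : PTm) :
    PTm.psubst (.con x M ts) z w = .con x M (ts.map (PTm.psubst · z w)) := by
  rw [PTm.psubst]
  congr 1
  exact List.attach_map_val (l := ts) (f := fun a => PTm.psubst a z w)

theorem PTm.toL_con (x : ℕ) (M : Tm) (ts : List PTm) :
    PTm.toL (.con x M ts) =
      PTm.substList (.lam x M) (PTm.fvList (.lam x M)) (ts.map PTm.toL) := by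
  rw [PTm.toL]
  congr 1
  exact List.attach_map_val

theorem PTm.IsConT.psubst_eq {t : PTm} (h : PTm.IsConT t) (z : ℕ) (w : PTm) :
    PTm.psubst t z w = t := by
  induction h with
  | con hts ih =>
    rw [PTm.psubst_con]
    congr 1
    have h1 : List.map (fun a => PTm.psubst a z w) _ = List.map id _ :=
      List.map_congr_left (fun t ht => ih t ht)
    rw [h1, List.map_id]

theorem psubstList_eq_foldl (t : PTm) (zs : List ℕ) (ws : List PTm) :
    PTm.psubstList t zs ws = (zs.zip ws).foldl (fun acc p => PTm.psubst acc p.1 p.2) t := rfl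

theorem foldl_psubst_ground {t : PTm} (h : PTm.IsConT t) (ps : List (ℕ × PTm)) :
    ps.foldl (fun acc p => PTm.psubst acc p.1 p.2) t = t := by
  induction ps with
  | nil => rfl
  | cons p ps ih => simp only [List.foldl_cons, h.psubst_eq, ih]

theorem foldl_psubst_papp (a b : PTm) (ps : List (ℕ × PTm)) :
    ps.foldl (fun acc p => PTm.psubst acc p.1 p.2) (.papp a b) =
      .papp (ps.foldl (fun acc p => PTm.psubst acc p.1 p.2) a)
            (ps.foldl (fun acc p => PTm.psubst acc p.1 p.2) b) := by
  induction ps generalizing a b with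
  | nil => rfl
  | cons p ps ih => simp only [List.foldl_cons, PTm.psubst, ih]

theorem foldl_psubst_con (x : ℕ) (M : Tm) (as : List PTm) (ps : List (ℕ × PTm)) :
    ps.foldl (fun acc p => PTm.psubst acc p.1 p.2) (.con x M as) =
      .con x M (as.map (fun a => ps.foldl (fun acc p => PTm.psubst acc p.1 p.2) a)) := by
  induction ps generalizing as with
  | nil => simp
  | cons p ps ih =>
    simp only [List.foldl_cons, PTm.psubst_con, ih, List.map_map]
    rfl

theorem foldl_psubst_pvar (x : ℕ) (ps : List (ℕ × PTm)) (h : ∀ p ∈ ps, PTm.IsConT p.2) :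
    ps.foldl (fun acc p => PTm.psubst acc p.1 p.2) (.pvar x) =
      ((ps.find? (fun p => p.1 == x)).map Prod.snd).getD (.pvar x) := by
  induction ps with
  | nil => rfl
  | cons p ps ih =>
    simp only [List.foldl_cons, List.find?]
    by_cases hx : p.1 = x
    · have hb : (p.1 == x) = true := by simp [hx]
      rw [hb]
      simp only [PTm.psubst, if_pos hx.symm]
      rw [foldl_psubst_ground (h p (List.mem_cons_self)) ps]
      rfl
    · have hb : (p.1 == x) = false := by simp [hx]
      rw [hb]
      rw [show PTm.psubst (.pvar x) p.1 p.2 = .pvar x by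
        simp only [PTm.psubst]
        rw [if_neg]
        intro hh
        exact hx hh.symm]
      exact ih (fun q hq => h q (List.mem_cons_of_mem _ hq))

theorem psubstList_pvar (x : ℕ) (zs : List ℕ) (ws : List PTm)
    (h : ∀ w ∈ ws, PTm.IsConT w) :
    PTm.psubstList (.pvar x) zs ws = plookup zs ws x := by
  rw [psubstList_eq_foldl, foldl_psubst_pvar]
  · rfl
  · intro p hp
    exact h p.2 (List.of_mem_zip hp).2

theorem toL_plookup (zs : List ℕ) (ws : List PTm) (x : ℕ) :
    PTm.toL (plookup zs ws x) = llookup zs (ws.map PTm.toL) x := by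
  unfold plookup llookup
  rw [List.zip_map_right, List.find?_map]
  have : ((fun (p : ℕ × Tm) => p.1 == x) ∘ Prod.map id PTm.toL) = fun (p : ℕ × PTm) => p.1 == x := by
    funext p; rfl
  rw [this]
  cases hf : (zs.zip ws).find? (fun p => p.1 == x) with
  | none => simp [PTm.toL]
  | some q => simp

end Aux3
section Aux4
open Tm PTm

theorem fvList_nodup (M : Tm) : (PTm.fvList M).Nodup := Finset.sort_nodup _ _

theorem mem_fvList {x : ℕ} {M : Tm} : x ∈ PTm.fvList M ↔ x ∈ M.fv := Finset.mem_sort _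

theorem fvList_toFinset (M : Tm) : (PTm.fvList M).toFinset = M.fv := Finset.sort_toFinset _ _

theorem not_mem_fvList_lam (y : ℕ) (M : Tm) : y ∉ PTm.fvList (Tm.lam y M) := by
  rw [mem_fvList]
  show y ∉ M.fv \ {y}
  simp

theorem substList_lam {y : ℕ} (P : Tm) {zs : List ℕ} (Ns : List Tm) (h : y ∉ zs) :
    PTm.substList (Tm.lam y P) zs Ns = Tm.lam y (PTm.substList P zs Ns) := by
  rw [substList_eq_foldl, substList_eq_foldl]
  exact foldl_subst_lam P _ (fun p hp hq => h (hq ▸ (List.of_mem_zip hp).1))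

theorem foldl_subst_app (P Q : Tm) (ps : List (ℕ × Tm)) :
    ps.foldl (fun acc p => acc.subst p.1 p.2) (Tm.app P Q) =
      Tm.app (ps.foldl (fun acc p => acc.subst p.1 p.2) P)
             (ps.foldl (fun acc p => acc.subst p.1 p.2) Q) := by
  induction ps generalizing P Q with
  | nil => rfl
  | cons p ps ih => simp only [List.foldl_cons, Tm.subst, ih]

theorem substList_append (A : Tm) (xs : List ℕ) (Ns : List Tm) (y : ℕ) (V : Tm)
    (h : xs.length = Ns.length) :
    PTm.substList A (xs ++ [y]) (Ns ++ [V]) = (PTm.substList A xs Ns).subst y V := by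
  rw [substList_eq_foldl, List.zip_append h, List.foldl_append]
  rfl

theorem conT_toL {t : PTm} (hg : PTm.IsConT t) (hwf : PTm.WF t) :
    Tm.Closed (PTm.toL t) ∧ ∃ y B, PTm.toL t = Tm.lam y B := by
  induction hg with
  | @con x M ts hts ih =>
    cases hwf with
    | con hlen hargs =>
      have hNs : ∀ N ∈ ts.map PTm.toL, Tm.Closed N := by
        intro N hN
        rcases List.mem_map.mp hN with ⟨t', ht', rfl⟩
        exact (ih t' ht' (hargs t' ht')).1
      have hy : x ∉ PTm.fvList (Tm.lam x M) := not_mem_fvList_lam x M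
      rw [PTm.toL_con, substList_lam _ _ hy]
      constructor
      · show Tm.fv (Tm.lam x (PTm.substList M (PTm.fvList (Tm.lam x M)) (ts.map PTm.toL))) = ∅
        rw [← substList_lam _ _ hy]
        have hsub := fv_foldl_subst (Tm.lam x M)
          ((PTm.fvList (Tm.lam x M)).zip (ts.map PTm.toL))
          (fun p hp => hNs p.2 (List.of_mem_zip hp).2)
        rw [← substList_eq_foldl] at hsub
        rw [List.map_fst_zip (by simp [← hlen]), fvList_toFinset] at hsub
        simp only [Finset.sdiff_self] at hsub
        exact Finset.subset_empty.mp hsub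
      · exact ⟨x, _, rfl⟩

theorem llookup_closed_or_var {zs : List ℕ} {Ns : List Tm}
    (hNs : ∀ N ∈ Ns, Tm.Closed N) (a : ℕ) :
    Tm.Closed (llookup zs Ns a) ∨ llookup zs Ns a = Tm.var a := by
  unfold llookup
  cases hf : (zs.zip Ns).find? (fun p => p.1 == a) with
  | none => right; rfl
  | some q =>
    left
    have hmem : q ∈ zs.zip Ns := List.mem_of_find?_eq_some hf
    simpa using hNs q.2 (List.of_mem_zip hmem).2

theorem zip_self_map {α β : Type*} (xs : List α) (g : α → β) :
    xs.zip (xs.map g) = xs.map (fun a => (a, g a)) := by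
  induction xs with
  | nil => rfl
  | cons a xs ih => simp only [List.map_cons, List.zip_cons_cons, ih]

theorem PTm.toL_papp (a b : PTm) : PTm.toL (.papp a b) = Tm.app (PTm.toL a) (PTm.toL b) := by
  rw [PTm.toL]

theorem substList_app (P Q : Tm) (zs : List ℕ) (Ns : List Tm) :
    PTm.substList (Tm.app P Q) zs Ns =
      Tm.app (PTm.substList P zs Ns) (PTm.substList Q zs Ns) := by
  rw [substList_eq_foldl, foldl_subst_app]
  rfl

theorem psubstList_papp (a b : PTm) (zs : List ℕ) (ws : List PTm) :
    PTm.psubstList (.papp a b) zs ws =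
      .papp (PTm.psubstList a zs ws) (PTm.psubstList b zs ws) := by
  rw [psubstList_eq_foldl, foldl_psubst_papp]
  rfl

theorem psubstList_con' (x : ℕ) (M : Tm) (as : List PTm) (zs : List ℕ) (ws : List PTm) :
    PTm.psubstList (.con x M as) zs ws =
      .con x M (as.map (fun a => PTm.psubstList a zs ws)) := by
  rw [psubstList_eq_foldl, foldl_psubst_con]
  rfl

theorem toL_psubstList_toP (M : Tm) (zs : List ℕ) (ws : List PTm)
    (hnd : zs.Nodup) (hg : ∀ w ∈ ws, PTm.IsConT w)
    (hcl : ∀ w ∈ ws, Tm.Closed (PTm.toL w)) :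
    PTm.toL (PTm.psubstList (PTm.toP M) zs ws) = PTm.substList M zs (ws.map PTm.toL) := by
  have hNs : ∀ N ∈ ws.map PTm.toL, Tm.Closed N := by
    intro N hN
    rcases List.mem_map.mp hN with ⟨w, hw, rfl⟩
    exact hcl w hw
  induction M with
  | var x =>
    rw [show PTm.toP (.var x) = .pvar x from rfl, psubstList_pvar x zs ws hg, toL_plookup,
      substList_eq_ssub _ _ _ hnd (fun p hp => Or.inl (hNs p.2 (List.of_mem_zip hp).2))]
    rfl
  | app P Q ih1 ih2 =>
    rw [show PTm.toP (.app P Q) = .papp (PTm.toP P) (PTm.toP Q) from rfl,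
      psubstList_papp, PTm.toL_papp, ih1, ih2, substList_app]
  | lam y P ih =>
    rw [show PTm.toP (.lam y P)
        = .con y P ((PTm.fvList (Tm.lam y P)).map .pvar) from rfl,
      psubstList_con', List.map_map, PTm.toL_con, List.map_map]
    have hmapeq : (PTm.fvList (Tm.lam y P)).map
        (PTm.toL ∘ ((fun a => PTm.psubstList a zs ws) ∘ PTm.pvar)) =
        (PTm.fvList (Tm.lam y P)).map (fun a => llookup zs (ws.map PTm.toL) a) := by
      apply List.map_congr_left
      intro a _
      show PTm.toL (PTm.psubstList (.pvar a) zs ws) = _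
      rw [psubstList_pvar a zs ws hg, toL_plookup]
    rw [hmapeq]
    have hndxs : (PTm.fvList (Tm.lam y P)).Nodup := fvList_nodup _
    rw [substList_eq_ssub _ _ _ hndxs (by
      intro p hp
      rw [zip_self_map] at hp
      rcases List.mem_map.mp hp with ⟨a, _, rfl⟩
      exact llookup_closed_or_var hNs a)]
    rw [substList_eq_ssub _ _ _ hnd (fun p hp => Or.inl (hNs p.2 (List.of_mem_zip hp).2))]
    apply Tm.ssub_congr
    intro x hx
    have hxxs : x ∈ PTm.fvList (Tm.lam y P) := mem_fvList.mpr hx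
    exact llookup_map (llookup zs (ws.map PTm.toL)) hndxs hxxs

end Aux4
/-- one-step simulation of weak CBV λ-reduction by Φ:
if `M →v N`, `t` is canonical and `⌈t⌉ = M`, then `t → u` in Φ for some `u`
with `⌈u⌉ = N`. -/
theorem cbv_simulated (M N : Tm) (t : PTm) (h : Tm.Cbv M N)
    (hwf : PTm.WF t) (hc : PTm.Canonical t) (ht : PTm.toL t = M) :
    ∃ u, PTm.Step t u ∧ PTm.toL u = N := by
  induction h generalizing t with
  | @beta x M V hV =>
    cases hc with
    | ofCon hg =>
      exfalso
      obtain ⟨-, y, B, hB⟩ := conT_toL hg hwf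
      rw [ht] at hB
      simp at hB
    | @papp u v hcu hcv =>
      cases hwf with
      | papp hwu hwv =>
      rw [PTm.toL_papp] at ht
      injection ht with ht1 ht2
      cases hcu with
      | papp hcu1 hcu2 =>
        rw [PTm.toL_papp] at ht1
        exact absurd ht1 (by simp)
      | ofCon hgu =>
        cases hgu with
        | @con y P ts hts =>
          cases hwu with
          | con hlen hargs =>
          have hy : y ∉ PTm.fvList (Tm.lam y P) := not_mem_fvList_lam y P
          rw [PTm.toL_con, substList_lam _ _ hy] at ht1
          injection ht1 with hxy hM
          have hgv : PTm.IsConT v := by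
            cases hcv with
            | ofCon h => exact h
            | papp h1 h2 =>
              exfalso
              rw [PTm.toL_papp] at ht2
              rw [← ht2] at hV
              simp [Tm.IsValue] at hV
          refine ⟨_, PTm.Step.beta hts hgv hlen, ?_⟩
          have hgs : ∀ w ∈ ts ++ [v], PTm.IsConT w := by
            intro w hw
            rcases List.mem_append.mp hw with hw | hw
            · exact hts w hw
            · rw [List.mem_singleton.mp hw]; exact hgv
          have hcls : ∀ w ∈ ts ++ [v], Tm.Closed (PTm.toL w) := by
            intro w hw
            rcases List.mem_append.mp hw with hw | hw
            · exact (conT_toL (hts w hw) (hargs w hw)).1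
            · rw [List.mem_singleton.mp hw]; exact (conT_toL hgv hwv).1
          have hnd : (PTm.fvList (Tm.lam y P) ++ [y]).Nodup := by
            rw [List.nodup_append]
            exact ⟨fvList_nodup _, List.nodup_singleton y,
              fun a ha => by simp; rintro rfl; exact hy ha⟩
          rw [toL_psubstList_toP P _ _ hnd hgs hcls, List.map_append]
          simp only [List.map_cons, List.map_nil]
          rw [substList_append _ _ _ _ _ (by simp [← hlen]), hM,
            show PTm.toL v = V from ht2, hxy]
  | @appL M' N' L hML ih =>
    cases hc with
    | ofCon hg =>
      exfalso
      obtain ⟨-, y, B, hB⟩ := conT_toL hg hwf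
      rw [ht] at hB
      simp at hB
    | @papp u v hcu hcv =>
      cases hwf with
      | papp hwu hwv =>
      rw [PTm.toL_papp] at ht
      injection ht with ht1 ht2
      obtain ⟨u', hstep, hu'⟩ := ih u hwu hcu ht1
      exact ⟨.papp u' v, .appL hstep, by rw [PTm.toL_papp, hu', ht2]⟩
  | @appR M' N' L hML ih =>
    cases hc with
    | ofCon hg =>
      exfalso
      obtain ⟨-, y, B, hB⟩ := conT_toL hg hwf
      rw [ht] at hB
      simp at hB
    | @papp u v hcu hcv =>
      cases hwf with
      | papp hwu hwv =>
      rw [PTm.toL_papp] at ht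
      injection ht with ht1 ht2
      obtain ⟨v', hstep, hv'⟩ := ih v hwv hcv ht2
      exact ⟨.papp u v', .appR hstep, by rw [PTm.toL_papp, hv', ht1]⟩
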